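/- Let λ, μ be real with μ > 0 and λ + μ > 0 and κ₀ > 0, δ(x₁) = ε + κ₀x₁². Define ū₁⁽¹⁾ = (2x₂+δ)/(2δ), ũ₁⁽¹⁾ = ((x₂/δ)² − 1/4)·(2 − μ/(λ+2μ))·(κ₀/3)·x₂, ũ₁⁽²⁾ = ((x₂/δ)² − 1/4)·(1 − μ/(λ+2μ))·κ₀·x₁. Then the singular parts cancel: (λ+2μ)(∂_{x₁x₁}ū₁⁽¹⁾ − R₁₁) + μ ∂_{x₂x₂}ũ₁⁽¹⁾ + (λ+μ)(∂_{x₁x₂}ũ₁⁽²⁾ − R₁₂) = 0, where R₁₁ = 8κ₀² x₁²x₂/δ³ and R₁₂ = −8κ₀²(λ+μ)/(λ+2μ) · x₁²x₂/δ³. -/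

import Mathlib

open Real

theorem stmt_6 (ε κ l μ : ℝ) (hε : 0 < ε) (hκ : 0 < κ) (hμ : 0 < μ)
    (hlμ : 0 < l + μ) (x y : ℝ) :
    (l + 2 * μ) *
        ((deriv (fun a =>
            deriv (fun a' => (2 * y + (ε + κ * a' ^ 2)) / (2 * (ε + κ * a' ^ 2))) a) x) -
          8 * κ ^ 2 * x ^ 2 * y / (ε + κ * x ^ 2) ^ 3) +
      μ *
        (deriv (fun b =>
          deriv (fun b' =>
            ((b' / (ε + κ * x ^ 2)) ^ 2 - 1/4) * (2 - μ / (l + 2 * μ)) * (κ / 3) * b') b) y) +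
      (l + μ) *
        ((deriv (fun b =>
            deriv (fun a =>
              ((b / (ε + κ * a ^ 2)) ^ 2 - 1/4) * (1 - μ / (l + 2 * μ)) * κ * a) x) y) -
          (-(8 * κ ^ 2 * (l + μ) / (l + 2 * μ)) * x ^ 2 * y / (ε + κ * x ^ 2) ^ 3)) = 0 := by
  have hδpos : ∀ a : ℝ, 0 < ε + κ * a ^ 2 := fun a => by positivity
  have hδne : ∀ a : ℝ, ε + κ * a ^ 2 ≠ 0 := fun a => (hδpos a).ne'
  have hL2 : l + 2 * μ ≠ 0 := by nlinarith
  have hpoly : ∀ a : ℝ, HasDerivAt (fun a' : ℝ => ε + κ * a' ^ 2) (2 * κ * a) a := by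
    intro a
    have h : HasDerivAt (fun a' : ℝ => ε + κ * a' ^ 2) _ a := ((hasDerivAt_pow 2 a).const_mul κ).const_add ε
    convert h using 1
    simp; ring
  -- Term 1 inner derivative
  have D1 : (deriv fun a' => (2 * y + (ε + κ * a' ^ 2)) / (2 * (ε + κ * a' ^ 2)))
      = fun a => -(2 * κ * y) * a / (ε + κ * a ^ 2) ^ 2 := by
    funext a
    have hnum : HasDerivAt (fun a' : ℝ => 2 * y + (ε + κ * a' ^ 2)) (2 * κ * a) a :=
      (hpoly a).const_add (2 * y)
    have hden : HasDerivAt (fun a' : ℝ => 2 * (ε + κ * a' ^ 2)) (2 * (2 * κ * a)) a :=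
      (hpoly a).const_mul 2
    have h := hnum.div hden (mul_ne_zero two_ne_zero (hδne a))
    erw [h.deriv]
    field_simp
    ring
  -- Term 1 outer derivative
  have hidx : HasDerivAt (fun a : ℝ => a) 1 x := hasDerivAt_id' x
  have D1' := (hidx.const_mul (-(2 * κ * y))).div ((hpoly x).pow 2)
    (pow_ne_zero 2 (hδne x))
  -- Term 2 inner derivative (in b')
  have D2 : (deriv fun b' =>
        ((b' / (ε + κ * x ^ 2)) ^ 2 - 1/4) * (2 - μ / (l + 2 * μ)) * (κ / 3) * b')
      = fun b => (2 - μ / (l + 2 * μ)) * (κ / 3) *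
          (3 * b ^ 2 / (ε + κ * x ^ 2) ^ 2 - 1/4) := by
    funext b
    have hg : HasDerivAt (fun b' : ℝ => ((b' / (ε + κ * x ^ 2)) ^ 2 - 1/4)
          * (2 - μ / (l + 2 * μ)) * (κ / 3))
        ((2 * (b / (ε + κ * x ^ 2)) ^ 1 * (1 / (ε + κ * x ^ 2)))
          * (2 - μ / (l + 2 * μ)) * (κ / 3)) b :=
      (((((hasDerivAt_id b).div_const _).pow 2).sub_const (1/4)).mul_const
        (2 - μ / (l + 2 * μ))).mul_const (κ / 3)
    have h := hg.mul (hasDerivAt_id' _)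
    erw [h.deriv]
    field_simp
    ring
  -- Term 2 outer derivative
  have D2' := ((((hasDerivAt_pow 2 y).const_mul 3).div_const
      ((ε + κ * x ^ 2) ^ 2)).sub_const (1/4)).const_mul ((2 - μ / (l + 2 * μ)) * (κ / 3))
  -- Term 3 inner derivative (in a, at x), as a function of b
  have D3 : (fun b => deriv (fun a =>
        ((b / (ε + κ * a ^ 2)) ^ 2 - 1/4) * (1 - μ / (l + 2 * μ)) * κ * a) x)
      = fun b => (1 - μ / (l + 2 * μ)) * κ *
          ((b ^ 2 * (ε + κ * x ^ 2) - 4 * κ * x ^ 2 * b ^ 2) / (ε + κ * x ^ 2) ^ 3 - 1/4) := by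
    funext b
    have hq : HasDerivAt (fun a : ℝ => b / (ε + κ * a ^ 2))
        ((0 * (ε + κ * x ^ 2) - b * (2 * κ * x)) / (ε + κ * x ^ 2) ^ 2) x :=
      (hasDerivAt_const x b).div (hpoly x) (hδne x)
    have hg : HasDerivAt (fun a : ℝ => ((b / (ε + κ * a ^ 2)) ^ 2 - 1/4)
          * (1 - μ / (l + 2 * μ)) * κ)
        ((2 * (b / (ε + κ * x ^ 2)) ^ 1
            * ((0 * (ε + κ * x ^ 2) - b * (2 * κ * x)) / (ε + κ * x ^ 2) ^ 2))
          * (1 - μ / (l + 2 * μ)) * κ) x :=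
      (((hq.pow 2).sub_const (1/4)).mul_const _).mul_const κ
    have h := hg.mul (hasDerivAt_id' _)
    erw [h.deriv]
    field_simp
    ring
  -- Term 3 outer derivative
  have D3' := (((((hasDerivAt_pow 2 y).mul_const (ε + κ * x ^ 2)).sub
      ((hasDerivAt_pow 2 y).const_mul (4 * κ * x ^ 2))).div_const
      ((ε + κ * x ^ 2) ^ 3)).sub_const (1/4)).const_mul ((1 - μ / (l + 2 * μ)) * κ)
  simp only [D1, D2, D3]
  erw [D1'.deriv, D2'.deriv, D3'.deriv]
  push_cast
  simp only [Pi.pow_apply]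
  field_simp
  ring
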